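/- For the two-loops quiver over ℂ and every n ≥ 1, the linear endomorphism u ↦ [H,u]_Q of ℂ(Q_n||Q_1) is diagonalizable; its eigenvalues are exactly the integers n+1−2l for l = 0, 1, …, n+1, and for each such l the eigenspace of eigenvalue n+1−2l has dimension C(n+1,l). -/

import Mathlib

/-! Two-loops quiver base: one vertex `e`, two loops `a`, `b`.

`Q_n` is the set of words of length `n` in `{a, b}` (all paths are parallel, since
there is a single vertex), and `ℂ(Q_n ∥ Q_1)` is the complex vector space with basis
`Q_n ∥ Q_1 = Q_n × Q_1`. -/

namespace TwoLoops

/-- The two arrows (loops) of the quiver. -/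
inductive TL : Type
  | a : TL
  | b : TL
deriving DecidableEq

instance : Fintype TL := ⟨{TL.a, TL.b}, fun x => by cases x <;> simp⟩

/-- Paths of length `n` in the two-loops quiver: words of length `n` in `{a, b}`. -/
abbrev Wd (n : ℕ) : Type := Fin n → TL

/-- `ℂ(Q_n ∥ Q_1)`: the complex vector space with basis `Q_n ∥ Q_1 = Q_n × Q_1`. -/
abbrev CQ1 (n : ℕ) : Type := (Wd n × TL) → ℂ

/-- `ℂ(Q_n ∥ Q_0)`: basis `Q_n ∥ Q_0 = Q_n` (the unique vertex `e` is omitted). -/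
abbrev CQ0 (n : ℕ) : Type := Wd n → ℂ

/-- The basis element `(γ, x)` of `ℂ(Q_n ∥ Q_1)`. -/
noncomputable def bE {n : ℕ} (γ : Wd n) (x : TL) : CQ1 n := Pi.single (γ, x) (1 : ℂ)

/-- The Gerstenhaber-type bracket `[·,·]_Q` on basis elements, for a degree-one
element `(c,x) ∈ Q_1 ∥ Q_1` against `(γ,y) ∈ Q_n ∥ Q_1`:
`[(c,x),(γ,y)]_Q = δ_{c,y}·(γ,x) − Σ_{i=1}^n δ_{γ_i,x}·(γ ⋄_i c, y)`,
which is the general formula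
`Σ_i (−1)^{(i−1)(m−1)} (α,x)∘_i(β,y) − (−1)^{(n−1)(m−1)} Σ_i (−1)^{(i−1)(n−1)} (β,y)∘_i(α,x)`
specialized to the case where the left argument has degree one (all signs are `+1`;
here `γ ⋄_i c` is the path obtained from `γ` by replacing its `i`-th arrow by `c`). -/
noncomputable def brB {n : ℕ} (P : Wd 1 × TL) (R : Wd n × TL) : CQ1 n :=
  (if P.1 0 = R.2 then bE R.1 P.2 else 0)
    - ∑ i : Fin n,
        (if R.1 i = P.2 then bE (Function.update R.1 i (P.1 0)) R.2 else 0)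

/-- The bracket `[f, ·]_Q` with a degree-one element `f ∈ ℂ(Q_1 ∥ Q_1)`, as a linear
endomorphism of `ℂ(Q_n ∥ Q_1)` (bilinear extension of `brB`). -/
noncomputable def brL {n : ℕ} (f : CQ1 1) : CQ1 n →ₗ[ℂ] CQ1 n :=
  ∑ P : Wd 1 × TL, ∑ R : Wd n × TL,
    f P • ((LinearMap.proj R : CQ1 n →ₗ[ℂ] ℂ).smulRight (brB P R))

/-- `H = (b,b) − (a,a)`. -/
noncomputable def H : CQ1 1 := bE (fun _ => TL.b) TL.b - bE (fun _ => TL.a) TL.a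

/-- `E = (a,b)`. -/
noncomputable def E : CQ1 1 := bE (fun _ => TL.a) TL.b

/-- `F = (b,a)`. -/
noncomputable def F : CQ1 1 := bE (fun _ => TL.b) TL.a

/-- `I = (a,a) + (b,b)`. -/
noncomputable def Iel : CQ1 1 := bE (fun _ => TL.a) TL.a + bE (fun _ => TL.b) TL.b

/-- `D_n` on basis elements: `D_n(γ,e) = (aγ,a) + (bγ,b) + (−1)^{n+1}((γa,a) + (γb,b))`. -/
noncomputable def DB (n : ℕ) (γ : Wd n) : CQ1 (n + 1) :=
  bE (Fin.cons TL.a γ) TL.a + bE (Fin.cons TL.b γ) TL.b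
    + ((-1 : ℂ) ^ (n + 1)) • (bE (Fin.snoc γ TL.a) TL.a + bE (Fin.snoc γ TL.b) TL.b)

/-- The linear map `D_n : ℂ(Q_n ∥ Q_0) → ℂ(Q_{n+1} ∥ Q_1)`. -/
noncomputable def Dmap (n : ℕ) : CQ0 n →ₗ[ℂ] CQ1 (n + 1) :=
  ∑ γ : Wd n, (LinearMap.proj γ : CQ0 n →ₗ[ℂ] ℂ).smulRight (DB n γ)

/-- `a(γ)`: the number of occurrences of the arrow `a` in the path `γ`. -/
def ca {n : ℕ} (γ : Wd n) : ℕ := (Finset.univ.filter fun i => γ i = TL.a).card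

/-- `b(γ)`: the number of occurrences of the arrow `b` in the path `γ`. -/
def cb {n : ℕ} (γ : Wd n) : ℕ := (Finset.univ.filter fun i => γ i = TL.b).card

/-- `v(γ) = a(γ) − b(γ)`. -/
def vv {n : ℕ} (γ : Wd n) : ℤ := (ca γ : ℤ) - (cb γ : ℤ)


/-! ### Auxiliary development -/


/-- The "l-index" of a basis element. -/
def kk {n : ℕ} (R : Wd n × TL) : ℕ := cb R.1 + (if R.2 = TL.a then 1 else 0)

lemma ca_add_cb {n : ℕ} (γ : Wd n) : ca γ + cb γ = n := by
  classical
  rw [ca, cb]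
  have : (Finset.univ.filter fun i => γ i = TL.b) = (Finset.univ.filter fun i => ¬ γ i = TL.a) := by
    apply Finset.filter_congr
    intro i _
    cases h : γ i <;> simp
  rw [this, Finset.card_filter_add_card_filter_not]
  simp

lemma kk_le {n : ℕ} (R : Wd n × TL) : kk R ≤ n + 1 := by
  have h1 : cb R.1 ≤ n := by
    have := ca_add_cb R.1
    omega
  have h2 : (if R.2 = TL.a then 1 else 0) ≤ 1 := by split_ifs <;> omega
  rw [kk]; omega

lemma dd_eq {n : ℕ} (R : Wd n × TL) :
    ((ca R.1 : ℂ) - cb R.1 + (if R.2 = TL.b then 1 else -1)) = (n : ℂ) + 1 - 2 * kk R := by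
  have h := ca_add_cb R.1
  have : (ca R.1 : ℂ) = (n : ℂ) - cb R.1 := by
    have := congrArg (Nat.cast (R := ℂ)) h
    push_cast at this ⊢
    linear_combination this
  rw [this, kk]
  cases hx : R.2 <;> push_cast <;> simp [hx] <;> ring

lemma innerSum {n : ℕ} (y : TL) (f : CQ1 n) (R : Wd n × TL) :
    (∑ S : Wd n × TL, f S *
      ((if y = S.2 then Pi.single (S.1, y) (1:ℂ) else (0 : CQ1 n)) R -
        ∑ c : Fin n, (if S.1 c = y then Pi.single (Function.update S.1 c y, S.2) (1:ℂ) else (0 : CQ1 n)) R))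
    = ((if R.2 = y then 1 else 0) - ((Finset.univ.filter fun i => R.1 i = y).card : ℂ)) * f R := by
  classical
  have hA : ∀ S : Wd n × TL,
      f S * (if y = S.2 then Pi.single (S.1, y) (1:ℂ) else (0 : CQ1 n)) R
        = if S = R then (if R.2 = y then 1 else 0) * f R else 0 := by
    intro S
    rcases eq_or_ne S R with rfl | hS
    · by_cases h : y = S.2
      · subst h
        simp [Pi.single_apply, mul_comm]
      · rw [if_neg h, if_pos rfl, if_neg (fun hh => h hh.symm), Pi.zero_apply, mul_zero, zero_mul]
    · by_cases h1 : y = S.2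
      · rw [if_pos h1, if_neg hS, Pi.single_eq_of_ne (by rintro rfl; exact hS (Prod.ext rfl h1.symm)), mul_zero]
      · rw [if_neg h1, if_neg hS, Pi.zero_apply, mul_zero]
  have hB : ∀ S : Wd n × TL,
      (∑ c : Fin n, (if S.1 c = y then Pi.single (Function.update S.1 c y, S.2) (1:ℂ) else (0 : CQ1 n)) R)
        = if S = R then ((Finset.univ.filter fun i => R.1 i = y).card : ℂ) else 0 := by
    intro S
    have hterm : ∀ c : Fin n,
        (if S.1 c = y then Pi.single (Function.update S.1 c y, S.2) (1:ℂ) else (0 : CQ1 n)) R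
          = if S.1 c = y then (if S = R then (1:ℂ) else 0) else 0 := by
      intro c
      by_cases h : S.1 c = y
      · rw [if_pos h, if_pos h, ← h, Function.update_eq_self]
        rw [show ((S.1, S.2) : Wd n × TL) = S from rfl, Pi.single_apply]
        by_cases h2 : S = R
        · rw [if_pos h2.symm, if_pos h2]
        · rw [if_neg (fun hh => h2 hh.symm), if_neg h2]
      · rw [if_neg h, if_neg h, Pi.zero_apply]
    rw [Finset.sum_congr rfl (fun c _ => hterm c)]
    by_cases h : S = R
    · subst h
      simp [Finset.sum_boole]
    · simp [h]
  calc (∑ S : Wd n × TL, f S *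
      ((if y = S.2 then Pi.single (S.1, y) (1:ℂ) else (0 : CQ1 n)) R -
        ∑ c : Fin n, (if S.1 c = y then Pi.single (Function.update S.1 c y, S.2) (1:ℂ) else (0 : CQ1 n)) R))
      = ∑ S : Wd n × TL,
          ((if S = R then (if R.2 = y then 1 else 0) * f R else 0)
            - (if S = R then ((Finset.univ.filter fun i => R.1 i = y).card : ℂ) * f R else 0)) := by
        refine Finset.sum_congr rfl fun S _ => ?_
        rw [mul_sub, hA S, hB S]
        by_cases h : S = R
        · subst h; rw [if_pos rfl, if_pos rfl, if_pos rfl]; ring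
        · simp [h]
    _ = _ := by
        rw [Finset.sum_sub_distrib, Finset.sum_ite_eq' Finset.univ R, Finset.sum_ite_eq' Finset.univ R]
        simp [sub_mul]

lemma brL_H_apply {n : ℕ} (f : CQ1 n) (R : Wd n × TL) :
    brL H f R = ((n : ℂ) + 1 - 2 * kk R) * f R := by
  classical
  rw [← dd_eq]
  simp only [brL, H, bE, brB, LinearMap.sum_apply, LinearMap.smul_apply,
    LinearMap.smulRight_apply, LinearMap.proj_apply, Finset.sum_apply, Pi.smul_apply,
    Pi.sub_apply, smul_eq_mul, Pi.single_apply]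
  simp only [sub_mul, ite_mul, one_mul, zero_mul, Finset.sum_sub_distrib]
  have pull : ∀ (g : Wd 1 × TL → Wd n × TL → ℂ) (q : Wd 1 × TL),
      (∑ x : Wd 1 × TL, ∑ x1 : Wd n × TL, if x = q then g x x1 else 0) = ∑ x1 : Wd n × TL, g q x1 := by
    intro g q
    rw [Finset.sum_comm]
    refine Finset.sum_congr rfl fun x1 _ => ?_
    rw [Finset.sum_ite_eq' Finset.univ q (fun x => g x x1)]
    simp
  rw [pull, pull]
  rw [innerSum TL.b f R, innerSum TL.a f R]
  rcases R with ⟨γ, x⟩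
  cases x <;> simp [ca, cb] <;> ring

lemma mu_inj {n : ℕ} {k l : ℕ} (h : (n : ℂ) + 1 - 2 * k = (n : ℂ) + 1 - 2 * l) : k = l := by
  have h2 : (2 : ℂ) * k = 2 * l := by linear_combination -h
  have h3 : (k : ℂ) = (l : ℂ) := mul_left_cancel₀ two_ne_zero h2
  exact_mod_cast h3

lemma mem_eigenspace_iff {n : ℕ} (μ : ℂ) (f : CQ1 n) :
    f ∈ Module.End.eigenspace (brL H : Module.End ℂ (CQ1 n)) μ ↔
      ∀ R : Wd n × TL, ((n : ℂ) + 1 - 2 * kk R) * f R = μ * f R := by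
  rw [Module.End.mem_eigenspace_iff]
  constructor
  · intro h R
    have := congrFun h R
    rw [brL_H_apply] at this
    simpa using this
  · intro h
    funext R
    rw [brL_H_apply]
    simpa using h R

lemma single_mem_eigenspace {n : ℕ} (R : Wd n × TL) (c : ℂ) :
    (Pi.single R c : CQ1 n) ∈
      Module.End.eigenspace (brL H : Module.End ℂ (CQ1 n)) ((n : ℂ) + 1 - 2 * kk R) := by
  rw [mem_eigenspace_iff]
  intro S
  rcases eq_or_ne S R with rfl | h
  · rfl
  · rw [Pi.single_eq_of_ne h, mul_zero, mul_zero]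

/-- flip of a letter -/
def flip : TL → TL
  | TL.a => TL.b
  | TL.b => TL.a

lemma flip_flip (x : TL) : flip (flip x) = x := by cases x <;> rfl

lemma cb_snoc {n : ℕ} (γ : Wd n) (y : TL) :
    cb (Fin.snoc γ y : Wd (n+1)) = cb γ + (if y = TL.b then 1 else 0) := by
  classical
  rw [cb, cb, Finset.card_filter, Finset.card_filter, Fin.sum_univ_castSucc]
  simp [Fin.snoc_castSucc, Fin.snoc_last]

/-- the equivalence `Wd n × TL ≃ Wd (n+1)` matching `kk` with `cb`. -/
noncomputable def e1 (n : ℕ) : (Wd n × TL) ≃ Wd (n + 1) where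
  toFun R := Fin.snoc R.1 (flip R.2)
  invFun w := (fun i => w i.castSucc, flip (w (Fin.last n)))
  left_inv R := by
    rcases R with ⟨γ, x⟩
    refine Prod.ext ?_ ?_
    · funext i
      simp [Fin.snoc_castSucc]
    · simp [Fin.snoc_last, flip_flip]
  right_inv w := by
    funext i
    refine Fin.lastCases ?_ ?_ i
    · simp [Fin.snoc_last, flip_flip]
    · intro j
      simp [Fin.snoc_castSucc]

lemma cb_e1 {n : ℕ} (R : Wd n × TL) : cb (e1 n R) = kk R := by
  rcases R with ⟨γ, x⟩
  rw [e1]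
  simp only [Equiv.coe_fn_mk]
  rw [cb_snoc, kk]
  cases x <;> simp [flip]

/-- words with `cb = l` correspond to `l`-element subsets. -/
noncomputable def e2 (m l : ℕ) : {w : Wd m // cb w = l} ≃ {s : Finset (Fin m) // s.card = l} where
  toFun w := ⟨Finset.univ.filter fun i => w.1 i = TL.b, w.2⟩
  invFun s := ⟨fun i => if i ∈ s.1 then TL.b else TL.a, by
    rw [cb]
    have : (Finset.univ.filter fun i => (if i ∈ s.1 then TL.b else TL.a) = TL.b) = s.1 := by
      ext i
      by_cases h : i ∈ s.1 <;> simp [h]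
    rw [this, s.2]⟩
  left_inv w := by
    refine Subtype.ext ?_
    funext i
    by_cases h : w.1 i = TL.b
    · simp [h]
    · have hwa : w.1 i = TL.a := by
        cases hh : w.1 i
        · rfl
        · exact absurd hh h
      simp [h, hwa]
  right_inv s := by
    refine Subtype.ext ?_
    ext i
    by_cases h : i ∈ s.1 <;> simp [h]

lemma card_kk_eq {n : ℕ} (l : ℕ) :
    Fintype.card {R : Wd n × TL // kk R = l} = Nat.choose (n + 1) l := by
  classical
  have h1 : {R : Wd n × TL // kk R = l} ≃ {w : Wd (n+1) // cb w = l} :=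
    (Equiv.subtypeEquiv (e1 n) (fun R => by rw [cb_e1]))
  rw [Fintype.card_congr h1, Fintype.card_congr (e2 (n+1) l), Fintype.card_finset_len,
    Fintype.card_fin]

lemma exists_kk {n : ℕ} (l : ℕ) (hl : l ≤ n + 1) : ∃ R : Wd n × TL, kk R = l := by
  have h : 0 < Fintype.card {R : Wd n × TL // kk R = l} := by
    rw [card_kk_eq]
    exact Nat.choose_pos hl
  obtain ⟨R⟩ := Fintype.card_pos_iff.mp h
  exact ⟨R.1, R.2⟩

lemma eigenspace_eq_span {n : ℕ} (l : ℕ) :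
    Module.End.eigenspace (brL H : Module.End ℂ (CQ1 n)) ((n : ℂ) + 1 - 2 * l)
      = Submodule.span ℂ (Set.range fun R : {R : Wd n × TL // kk R = l} =>
          (Pi.single R.1 (1:ℂ) : CQ1 n)) := by
  apply le_antisymm
  · intro f hf
    rw [mem_eigenspace_iff] at hf
    rw [← Finset.univ_sum_single f]
    apply Submodule.sum_mem
    intro R _
    by_cases h : kk R = l
    · have : (Pi.single R (f R) : CQ1 n) = f R • (Pi.single R (1:ℂ) : CQ1 n) := by
        rw [← Pi.single_smul, smul_eq_mul, mul_one]
      rw [this]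
      exact Submodule.smul_mem _ _ (Submodule.subset_span ⟨⟨R, h⟩, rfl⟩)
    · have hR : f R = 0 := by
        have := hf R
        by_contra hne
        exact h (mu_inj (mul_right_cancel₀ hne this))
      rw [hR, Pi.single_zero]
      exact Submodule.zero_mem _
  · rw [Submodule.span_le]
    rintro _ ⟨R, rfl⟩
    have := single_mem_eigenspace (n := n) R.1 (1:ℂ)
    rwa [R.2] at this

lemma finrank_eigenspace {n : ℕ} (l : ℕ) :
    Module.finrank ℂ
        (Module.End.eigenspace (brL H : Module.End ℂ (CQ1 n)) ((n : ℂ) + 1 - 2 * l))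
      = Nat.choose (n + 1) l := by
  classical
  rw [eigenspace_eq_span, ← card_kk_eq (n := n) l]
  have hli : LinearIndependent ℂ (fun R : {R : Wd n × TL // kk R = l} =>
      (Pi.single R.1 (1:ℂ) : CQ1 n)) := by
    have hb := (Pi.basisFun ℂ (Wd n × TL)).linearIndependent
    have h2 := hb.comp (Subtype.val : {R : Wd n × TL // kk R = l} → Wd n × TL) Subtype.val_injective
    have h3 : ((⇑(Pi.basisFun ℂ (Wd n × TL)) ∘ (Subtype.val : {R : Wd n × TL // kk R = l} → Wd n × TL))
        = fun R : {R : Wd n × TL // kk R = l} => (Pi.single R.1 (1:ℂ) : CQ1 n)) := by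
      funext R
      simp [Pi.basisFun_apply]
    rwa [h3] at h2
  rw [finrank_span_eq_card hli]

/-- STATEMENT 6: for every `n ≥ 1`, the endomorphism `u ↦ [H,u]_Q` of `ℂ(Q_n ∥ Q_1)` is
diagonalizable (its eigenspaces span the whole space); its eigenvalues are exactly the
integers `n+1−2l` for `l = 0, 1, …, n+1`; and for each such `l` the eigenspace of the
eigenvalue `n+1−2l` has dimension `C(n+1,l)`. -/
theorem stmt6 (n : ℕ) (hn : 1 ≤ n) :
    (⨆ μ : ℂ, Module.End.eigenspace (brL H : Module.End ℂ (CQ1 n)) μ) = ⊤ ∧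
    (∀ μ : ℂ, Module.End.HasEigenvalue (brL H : Module.End ℂ (CQ1 n)) μ ↔
      ∃ l : ℕ, l ≤ n + 1 ∧ μ = (n : ℂ) + 1 - 2 * l) ∧
    (∀ l : ℕ, l ≤ n + 1 →
      Module.finrank ℂ
          (Module.End.eigenspace (brL H : Module.End ℂ (CQ1 n)) ((n : ℂ) + 1 - 2 * l))
        = Nat.choose (n + 1) l) := by
  refine ⟨?_, ?_, fun l _ => finrank_eigenspace l⟩
  · rw [eq_top_iff]
    intro f _
    rw [← Finset.univ_sum_single f]
    apply Submodule.sum_mem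
    intro R _
    exact Submodule.mem_iSup_of_mem ((n : ℂ) + 1 - 2 * kk R) (single_mem_eigenspace R (f R))
  · intro μ
    constructor
    · intro h
      obtain ⟨f, hf, hne⟩ := (Submodule.ne_bot_iff _).mp h
      rw [mem_eigenspace_iff] at hf
      obtain ⟨R, hR⟩ := Function.ne_iff.mp hne
      refine ⟨kk R, kk_le R, ?_⟩
      exact (mul_right_cancel₀ hR (hf R)).symm
    · rintro ⟨l, hl, rfl⟩
      obtain ⟨R, hR⟩ := exists_kk l hl
      apply Module.End.hasEigenvalue_of_hasEigenvector (x := (Pi.single R (1:ℂ) : CQ1 n))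
      refine ⟨?_, ?_⟩
      · have := single_mem_eigenspace (n := n) R (1:ℂ)
        rwa [hR] at this
      · intro h
        have := congrFun h R
        simp at this


end TwoLoops
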